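/- Let uⱼ be a sequence of continuous maximal (n−1)-PSH functions on ℂⁿ converging locally uniformly to u. Then u is continuous, (n−1)-PSH, and maximal. -/

import Mathlib

open scoped BigOperators
open MeasureTheory

/-- Lebesgue measure on `ℂⁿ` with the Euclidean metric (the `PiLp` type synonym does not
carry a `MeasureSpace` instance by default). -/
noncomputable instance (m : ℕ) : MeasureSpace (EuclideanSpace ℂ (Fin m)) :=
  letI : MeasurableSpace (EuclideanSpace ℂ (Fin m)) :=
    MeasurableSpace.comap WithLp.ofLp (inferInstance : MeasurableSpace (Fin m → ℂ))
  ⟨Measure.map (WithLp.toLp 2) (volume : Measure (Fin m → ℂ))⟩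

/-- The sub-mean value property on a set: `f` is dominated by its ball averages, for balls
contained in `S`.  For continuous `f` this characterizes subharmonicity on `S`. -/
def SubMeanOn (m : ℕ) (S : Set (EuclideanSpace ℂ (Fin m)))
    (f : EuclideanSpace ℂ (Fin m) → ℝ) : Prop :=
  ∀ z r, 0 < r → Metric.closedBall z r ⊆ S →
    f z ≤ ⨍ w in Metric.ball z r, f w

/-- A continuous function `u` on `Ω ⊂ ℂⁿ` is `(n−1)`-plurisubharmonic if its restriction
to every affine `(n−1)`-dimensional complex subspace (image of a complex linear isometry
`ℂ^{n-1} → ℂⁿ` translated by `b`) is subharmonic (Harvey–Lawson's characterization). -/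
def NPSHOn (n : ℕ) (Ω : Set (EuclideanSpace ℂ (Fin n)))
    (u : EuclideanSpace ℂ (Fin n) → ℝ) : Prop :=
  ContinuousOn u Ω ∧
    ∀ (A : EuclideanSpace ℂ (Fin (n - 1)) →ₗᵢ[ℂ] EuclideanSpace ℂ (Fin n))
      (b : EuclideanSpace ℂ (Fin n)),
      SubMeanOn (n - 1) ((fun w => A w + b) ⁻¹' Ω) (fun w => u (A w + b))

/-- `u` is maximal: for every relatively compact open `Ω'` and every continuous
`(n−1)`-PSH function `v` on a neighborhood `Ω''` of `cl(Ω')` with `v ≤ u` on `∂Ω'`,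
one has `v ≤ u` on `Ω'`. -/
def MaximalNPSH (n : ℕ) (u : EuclideanSpace ℂ (Fin n) → ℝ) : Prop :=
  ∀ (Ω' Ω'' : Set (EuclideanSpace ℂ (Fin n))), IsOpen Ω' → Bornology.IsBounded Ω' →
    IsOpen Ω'' → closure Ω' ⊆ Ω'' →
    ∀ v : EuclideanSpace ℂ (Fin n) → ℝ, NPSHOn n Ω'' v →
      (∀ z ∈ frontier Ω', v z ≤ u z) → ∀ z ∈ Ω', v z ≤ u z

/-- If `uⱼ` is a sequence of continuous maximal `(n−1)`-PSH functions on `ℂⁿ` converging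
locally uniformly to `u`, then `u` is continuous, `(n−1)`-PSH and maximal. -/
-- auxiliary
instance (m : ℕ) : BorelSpace (EuclideanSpace ℂ (Fin m)) :=
  PiLp.borelSpace 2

instance (m : ℕ) : (volume : Measure (EuclideanSpace ℂ (Fin m))).IsOpenPosMeasure := by
  show (Measure.map (WithLp.toLp 2) (volume : Measure (Fin m → ℂ))).IsOpenPosMeasure
  exact (PiLp.continuous_toLp 2 _).isOpenPosMeasure_map (WithLp.toLp_surjective 2)

instance (m : ℕ) : IsFiniteMeasureOnCompacts (volume : Measure (EuclideanSpace ℂ (Fin m))) := by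
  show IsFiniteMeasureOnCompacts (Measure.map (WithLp.toLp 2) (volume : Measure (Fin m → ℂ)))
  exact Measure.IsFiniteMeasureOnCompacts.map _ (PiLp.homeomorph 2 _).symm

lemma avg_sub_const {m : ℕ} {s : Set (EuclideanSpace ℂ (Fin m))} (h0 : volume s ≠ 0)
    (hT : volume s ≠ ⊤) {g : EuclideanSpace ℂ (Fin m) → ℝ} (hg : IntegrableOn g s volume)
    (c : ℝ) : (⨍ w in s, (g w - c)) = (⨍ w in s, g w) - c := by
  have hc : IntegrableOn (fun _ => c) s volume := integrableOn_const hT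
  rw [setAverage_eq, setAverage_eq, integral_sub hg hc, setIntegral_const]
  have hne : volume.real s ≠ 0 := ENNReal.toReal_ne_zero.2 ⟨h0, hT⟩
  simp only [smul_eq_mul]
  field_simp

lemma tendsto_setAverage {m : ℕ} (z : EuclideanSpace ℂ (Fin m)) (r : ℝ)
    {g : ℕ → EuclideanSpace ℂ (Fin m) → ℝ} {G : EuclideanSpace ℂ (Fin m) → ℝ}
    (hg : ∀ j, ContinuousOn (g j) (Metric.ball z r))
    (hG : ContinuousOn G (Metric.closedBall z r))
    (huc : TendstoUniformlyOn g G Filter.atTop (Metric.ball z r)) :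
    Filter.Tendsto (fun j => ⨍ w in Metric.ball z r, g j w) Filter.atTop
      (nhds (⨍ w in Metric.ball z r, G w)) := by
  have hs : MeasurableSet (Metric.ball z r) := measurableSet_ball
  have hint : Filter.Tendsto (fun j => ∫ w in Metric.ball z r, g j w) Filter.atTop
      (nhds (∫ w in Metric.ball z r, G w)) := by
    refine tendsto_integral_filter_of_dominated_convergence (fun w => |G w| + 1)
      (Filter.Eventually.of_forall fun j => (hg j).aestronglyMeasurable hs) ?_ ?_ ?_
    · have h1 := (Metric.tendstoUniformlyOn_iff.mp huc) 1 one_pos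
      filter_upwards [h1] with j hj
      refine (ae_restrict_iff' hs).2 (Filter.Eventually.of_forall fun w hw => ?_)
      have h2 := hj w hw
      rw [Real.dist_eq] at h2
      have h3 : |g j w| ≤ |G w| + |g j w - G w| := by
        calc |g j w| = |G w + (g j w - G w)| := by ring_nf
          _ ≤ |G w| + |g j w - G w| := abs_add_le _ _
      have h4 : |g j w - G w| = |G w - g j w| := abs_sub_comm _ _
      simp only [Real.norm_eq_abs]
      linarith
    · exact ((hG.abs.add continuousOn_const).integrableOn_compact
        (isCompact_closedBall z r)).mono_set Metric.ball_subset_closedBall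
    · exact (ae_restrict_iff' hs).2
        (Filter.Eventually.of_forall fun w hw => huc.tendsto_at hw)
  simp only [setAverage_eq]
  exact hint.const_smul _


theorem stmt_13 (n : ℕ) (hn : 2 ≤ n) (u : ℕ → EuclideanSpace ℂ (Fin n) → ℝ)
    (f : EuclideanSpace ℂ (Fin n) → ℝ)
    (hcont : ∀ j, Continuous (u j))
    (hpsh : ∀ j, NPSHOn n Set.univ (u j))
    (hmax : ∀ j, MaximalNPSH n (u j))
    (hconv : TendstoLocallyUniformly u f Filter.atTop) :
    Continuous f ∧ NPSHOn n Set.univ f ∧ MaximalNPSH n f := by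
  have hfc : Continuous f := hconv.continuous (Filter.Eventually.of_forall hcont).frequently
  have hK : ∀ K : Set (EuclideanSpace ℂ (Fin n)), IsCompact K →
      TendstoUniformlyOn u f Filter.atTop K :=
    tendstoLocallyUniformly_iff_forall_isCompact.mp hconv
  refine ⟨hfc, ⟨hfc.continuousOn, ?_⟩, ?_⟩
  · -- NPSH
    intro A b z r hr _
    set φ : EuclideanSpace ℂ (Fin (n - 1)) → EuclideanSpace ℂ (Fin n) :=
      fun w => A w + b with hφdef
    have hφ : Continuous φ := A.continuous.add continuous_const
    have hKc : IsCompact (φ '' Metric.closedBall z r) :=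
      (isCompact_closedBall z r).image hφ
    have huc : TendstoUniformlyOn (fun j w => u j (φ w)) (fun w => f (φ w)) Filter.atTop
        (Metric.ball z r) := by
      have := ((hK _ hKc).comp φ).mono (s' := Metric.ball z r)
        (fun w hw => Set.mem_preimage.2 (Set.mem_image_of_mem φ
          (Metric.ball_subset_closedBall hw)))
      exact this
    have h1 : Filter.Tendsto (fun j => u j (φ z)) Filter.atTop (nhds (f (φ z))) :=
      (hK _ hKc).tendsto_at (Set.mem_image_of_mem φ (Metric.mem_closedBall_self hr.le))
    have h2 := tendsto_setAverage z r
      (fun j => ((hcont j).comp hφ).continuousOn)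
      ((hfc.comp hφ).continuousOn) huc
    have h3 : ∀ j, u j (φ z) ≤ ⨍ w in Metric.ball z r, u j (φ w) := fun j =>
      (hpsh j).2 A b z r hr (Set.subset_univ _)
    exact le_of_tendsto_of_tendsto' h1 h2 h3
  · -- maximal
    intro Ω' Ω'' hO1 hbd hO2 hcl v hv hb z hz
    refine le_of_forall_pos_le_add fun ε hε => ?_
    set δ : ℝ := ε / 2 with hδdef
    have hδ : 0 < δ := by positivity
    have hcc : IsCompact (closure Ω') :=
      Metric.isCompact_of_isClosed_isBounded isClosed_closure hbd.closure
    have hfr : IsCompact (frontier Ω') :=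
      hcc.of_isClosed_subset isClosed_frontier frontier_subset_closure
    have hKc : IsCompact (insert z (frontier Ω')) := hfr.insert z
    obtain ⟨J, hJ⟩ := ((Metric.tendstoUniformlyOn_iff.mp (hK _ hKc)) δ hδ).exists
    set vδ : EuclideanSpace ℂ (Fin n) → ℝ := fun w => v w - δ with hvδdef
    have hvδ : NPSHOn n Ω'' vδ := by
      refine ⟨hv.1.sub continuousOn_const, fun A b z' r hr hss => ?_⟩
      set φ : EuclideanSpace ℂ (Fin (n - 1)) → EuclideanSpace ℂ (Fin n) :=
        fun w => A w + b with hφdef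
      have hφ : Continuous φ := A.continuous.add continuous_const
      have hvint : IntegrableOn (fun w => v (φ w)) (Metric.ball z' r) volume := by
        have : ContinuousOn (fun w => v (φ w)) (Metric.closedBall z' r) :=
          hv.1.comp hφ.continuousOn (fun w hw => hss hw)
        exact (this.integrableOn_compact (isCompact_closedBall z' r)).mono_set
          Metric.ball_subset_closedBall
      have h0 : volume (Metric.ball z' r) ≠ 0 :=
        (Metric.measure_ball_pos _ _ hr).ne'
      have hT : volume (Metric.ball z' r) ≠ ⊤ := measure_ball_lt_top.ne
      have := hv.2 A b z' r hr hss
      calc v (φ z') - δ ≤ (⨍ w in Metric.ball z' r, v (φ w)) - δ := by linarith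
        _ = ⨍ w in Metric.ball z' r, (v (φ w) - δ) := (avg_sub_const h0 hT hvint δ).symm
    have hbdryδ : ∀ w ∈ frontier Ω', vδ w ≤ u J w := by
      intro w hw
      have h2 := hJ w (Set.mem_insert_of_mem _ hw)
      rw [Real.dist_eq] at h2
      have h3 := hb w hw
      have h4 : f w - u J w < δ := (abs_lt.mp h2).2
      simp only [hvδdef]
      linarith
    have hvu := hmax J Ω' Ω'' hO1 hbd hO2 hcl vδ hvδ hbdryδ z hz
    have h5 := hJ z (Set.mem_insert _ _)
    rw [Real.dist_eq] at h5
    have h6 : u J z - f z < δ := by cases abs_lt.mp h5; linarith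
    simp only [hvδdef] at hvu
    linarith [hδdef ▸ hδ]
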